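/- Let D ⊂ ℂ be a compact set with positive Lebesgue measure, V : ℂ → ℝ continuous, and let μ be the equilibrium measure for V on D. Define E(z) = V(z) + 2∫ log|z−ζ|⁻¹ dμ(ζ) and E₀ = ∫ E(z) dμ(z). Then E(z) = E₀ for μ-almost every z. -/

import Mathlib

open MeasureTheory Complex Metric
open scoped ENNReal

/-- The (weighted logarithmic) energy `I(μ) = ∫ V dμ + ∬ log|z-ζ|⁻¹ dμ(ζ)dμ(z)`,
with values in `EReal` so that measures whose logarithmic energy diverges get energy `⊤`. -/
noncomputable def energyE (V : ℂ → ℝ) (μ : Measure ℂ) : EReal :=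
  ((∫ z, V z ∂μ : ℝ) : EReal) +
    ((∫⁻ p : ℂ × ℂ, ENNReal.ofReal (Real.log ‖p.1 - p.2‖⁻¹) ∂(μ.prod μ) : ℝ≥0∞) : EReal) -
    ((∫ p : ℂ × ℂ, max (Real.log ‖p.1 - p.2‖) 0 ∂(μ.prod μ) : ℝ) : EReal)

/-- Borel probability measures supported in `D` having no point masses. -/
def AdmissibleOn (D : Set ℂ) (μ : Measure ℂ) : Prop :=
  IsProbabilityMeasure μ ∧ μ Dᶜ = 0 ∧ ∀ z : ℂ, μ {z} = 0

/-- `I₀`, the infimum of the energy over admissible measures. -/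
noncomputable def equilibriumValue (D : Set ℂ) (V : ℂ → ℝ) : EReal :=
  ⨅ ν ∈ {ν : Measure ℂ | AdmissibleOn D ν}, energyE V ν

/-- An equilibrium measure for `V` on `D`: an admissible measure realizing `I₀`. -/
def IsEquilibriumOn (D : Set ℂ) (V : ℂ → ℝ) (μ : Measure ℂ) : Prop :=
  AdmissibleOn D μ ∧ energyE V μ = equilibriumValue D V


namespace EqmProof
open Set

noncomputable def kk : ℂ × ℂ → ℝ≥0∞ := fun p => ENNReal.ofReal (Real.log ‖p.1 - p.2‖⁻¹)
noncomputable def kp : ℂ × ℂ → ℝ := fun p => max (Real.log ‖p.1 - p.2‖) 0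

lemma meas_kk : Measurable kk :=
  ((measurable_fst.sub measurable_snd).norm.inv.log).ennreal_ofReal

lemma meas_kp : Measurable kp :=
  ((measurable_fst.sub measurable_snd).norm.log).max measurable_const

lemma kp_nonneg (p : ℂ × ℂ) : 0 ≤ kp p := le_max_right _ _

lemma ofReal_max_zero (a : ℝ) : ENNReal.ofReal (max a 0) = ENNReal.ofReal a := by
  rcases le_total a 0 with h | h
  · simp [max_eq_right h, ENNReal.ofReal_eq_zero.2 h]
  · simp [max_eq_left h]

lemma lintegral_negLog_lt_top : ∫⁻ u : ℂ, ENNReal.ofReal (-Real.log ‖u‖) < ⊤ := by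
  have h := lintegral_eq_lintegral_meas_lt (volume : Measure ℂ)
      (f := fun u => max (-Real.log ‖u‖) 0) (Filter.Eventually.of_forall fun u => le_max_right _ _)
      ((measurable_norm.log.neg.max measurable_const).aemeasurable)
  simp_rw [ofReal_max_zero] at h
  rw [h]
  have hbound : ∀ t ∈ Ioi (0:ℝ),
      volume {a : ℂ | t < max (-Real.log ‖a‖) 0}
        ≤ (NNReal.pi : ℝ≥0∞) * ENNReal.ofReal (Real.exp (-2*t)) := by
    intro t ht
    have hsub : {a : ℂ | t < max (-Real.log ‖a‖) 0} ⊆ Metric.ball (0:ℂ) (Real.exp (-t)) := by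
      intro a ha
      simp only [mem_setOf_eq, lt_max_iff] at ha
      rcases ha with ha | ha
      · rcases eq_or_ne a 0 with rfl | h0
        · simp at ha; linarith [ht.out]
        · have hn : 0 < ‖a‖ := norm_pos_iff.2 h0
          have : Real.log ‖a‖ < -t := by linarith
          have := (Real.log_lt_iff_lt_exp hn).1 this
          simpa [Metric.mem_ball, Complex.dist_eq, sub_zero] using this
      · exact absurd ha (not_lt.2 ht.out.le)
    calc volume {a : ℂ | t < max (-Real.log ‖a‖) 0}
        ≤ volume (Metric.ball (0:ℂ) (Real.exp (-t))) := measure_mono hsub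
      _ = ENNReal.ofReal (Real.exp (-t)) ^ 2 * NNReal.pi := Complex.volume_ball 0 _
      _ = (NNReal.pi : ℝ≥0∞) * ENNReal.ofReal (Real.exp (-2*t)) := by
          rw [← ENNReal.ofReal_pow (Real.exp_nonneg _), ← Real.exp_nat_mul]
          ring_nf
  calc ∫⁻ t in Ioi (0:ℝ), volume {a : ℂ | t < max (-Real.log ‖a‖) 0}
      ≤ ∫⁻ t in Ioi (0:ℝ), (NNReal.pi : ℝ≥0∞) * ENNReal.ofReal (Real.exp (-2*t)) :=
        setLIntegral_mono' measurableSet_Ioi hbound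
    _ = (NNReal.pi : ℝ≥0∞) * ∫⁻ t in Ioi (0:ℝ), ENNReal.ofReal (Real.exp (-2*t)) :=
        lintegral_const_mul' _ _ (by simp)
    _ < ⊤ := by
        apply ENNReal.mul_lt_top (by simp)
        exact (exp_neg_integrableOn_Ioi 0 (by norm_num : (0:ℝ) < 2)).lintegral_lt_top

lemma lintegral_negLog_translate (z : ℂ) :
    ∫⁻ w : ℂ, ENNReal.ofReal (-Real.log ‖z - w‖) = ∫⁻ u : ℂ, ENNReal.ofReal (-Real.log ‖u‖) := by
  have h : ∀ w : ℂ, ‖z - w‖ = ‖w - z‖ := fun w => norm_sub_rev _ _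
  simp_rw [h]
  exact lintegral_sub_right_eq_self (fun u => ENNReal.ofReal (-Real.log ‖u‖)) z

lemma finite_kk_leb (D : Set ℂ) (hD : IsCompact D) :
    ∫⁻ p, kk p ∂((volume.restrict D).prod (volume.restrict D)) < ⊤ := by
  set C := ∫⁻ u : ℂ, ENNReal.ofReal (-Real.log ‖u‖) with hC
  rw [lintegral_prod _ meas_kk.aemeasurable]
  have hinner : ∀ z : ℂ, ∫⁻ w, kk (z, w) ∂(volume.restrict D) ≤ C := by
    intro z
    calc ∫⁻ w, kk (z, w) ∂(volume.restrict D)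
        ≤ ∫⁻ w, kk (z, w) ∂volume := lintegral_mono' Measure.restrict_le_self le_rfl
      _ = C := by unfold kk; simp_rw [Real.log_inv]; exact lintegral_negLog_translate z
  calc ∫⁻ z, ∫⁻ w, kk (z, w) ∂(volume.restrict D) ∂(volume.restrict D)
      ≤ ∫⁻ _, C ∂(volume.restrict D) := lintegral_mono hinner
    _ = C * volume D := by simp [lintegral_const]
    _ < ⊤ := ENNReal.mul_lt_top lintegral_negLog_lt_top hD.measure_lt_top

lemma coe_ennreal_eq (x : ℝ≥0∞) (hx : x ≠ ⊤) : (x : EReal) = ((x.toReal : ℝ) : EReal) := by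
  have h1 : (x : EReal) ≠ ⊤ := by simpa [EReal.coe_ennreal_eq_top_iff] using hx
  have h2 : (x : EReal) ≠ ⊥ := by simp
  rw [← EReal.coe_toReal h1 h2, EReal.toReal_coe_ennreal]

variable {α : Type*} [MeasurableSpace α]

lemma smul_prod'' (c : ℝ≥0∞) (μ ν : Measure α) [IsFiniteMeasure μ] [IsFiniteMeasure ν]
    (hc : c ≠ ⊤) : (c • μ).prod ν = c • μ.prod ν := by
  have : IsFiniteMeasure (c • μ) := ⟨by
    simp only [Measure.smul_apply, smul_eq_mul]
    exact ENNReal.mul_lt_top hc.lt_top (measure_lt_top μ _)⟩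
  refine Measure.prod_eq fun s t hs ht => ?_
  simp [Measure.prod_prod, mul_assoc]

lemma prod_smul'' (c : ℝ≥0∞) (μ ν : Measure α) [IsFiniteMeasure μ] [IsFiniteMeasure ν]
    (hc : c ≠ ⊤) : μ.prod (c • ν) = c • μ.prod ν := by
  have : IsFiniteMeasure (c • ν) := ⟨by
    simp only [Measure.smul_apply, smul_eq_mul]
    exact ENNReal.mul_lt_top hc.lt_top (measure_lt_top ν _)⟩
  refine Measure.prod_eq fun s t hs ht => ?_
  simp [Measure.prod_prod]; ring

lemma ae_prod_mem {D : Set ℂ} (σ τ : Measure ℂ) [SFinite σ] [SFinite τ]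
    (hσ : σ Dᶜ = 0) (hτ : τ Dᶜ = 0) :
    ∀ᵐ p ∂(σ.prod τ), p.1 ∈ D ∧ p.2 ∈ D := by
  have h1 : ∀ᵐ p ∂(σ.prod τ), p.1 ∈ D := by
    have he : (Prod.fst ⁻¹' Dᶜ : Set (ℂ × ℂ)) = Dᶜ ×ˢ (univ : Set ℂ) := by ext p; simp
    have : (σ.prod τ) (Prod.fst ⁻¹' Dᶜ) = 0 := by
      rw [he, Measure.prod_prod, hσ, zero_mul]
    exact this
  have h2 : ∀ᵐ p ∂(σ.prod τ), p.2 ∈ D := by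
    have : (σ.prod τ) (Prod.snd ⁻¹' Dᶜ) = 0 := by
      have : (Prod.snd ⁻¹' Dᶜ : Set (ℂ × ℂ)) = (univ : Set ℂ) ×ˢ Dᶜ := by
        ext p; simp
      rw [this, Measure.prod_prod, hτ, mul_zero]
    exact this
  filter_upwards [h1, h2] with p hp1 hp2
  exact ⟨hp1, hp2⟩


section Bounds
variable {D : Set ℂ}

lemma kp_bound (hD : IsCompact D) {z w : ℂ} (hz : z ∈ D) (hw : w ∈ D) :
    kp (z, w) ≤ max (Real.log (Metric.diam D + 1)) 0 := by
  have hd : dist z w ≤ Metric.diam D := Metric.dist_le_diam_of_mem hD.isBounded hz hw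
  have hd0 : (0:ℝ) ≤ Metric.diam D := Metric.diam_nonneg
  rcases eq_or_ne z w with rfl | hzw
  · simp [kp, Real.log_nonneg, le_max_iff]
  · have hn : 0 < ‖z - w‖ := by
      rw [norm_pos_iff, sub_ne_zero]; exact hzw
    have : Real.log ‖z - w‖ ≤ Real.log (Metric.diam D + 1) := by
      apply Real.log_le_log hn
      have : ‖z - w‖ = dist z w := (Complex.dist_eq z w).symm
      linarith
    exact max_le_max this le_rfl

lemma integrable_kp (hD : IsCompact D) (σ τ : Measure ℂ) [IsFiniteMeasure σ] [IsFiniteMeasure τ]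
    (hσ : σ Dᶜ = 0) (hτ : τ Dᶜ = 0) : Integrable kp (σ.prod τ) := by
  refine Integrable.mono' (integrable_const (max (Real.log (Metric.diam D + 1)) 0))
    meas_kp.aestronglyMeasurable ?_
  filter_upwards [ae_prod_mem σ τ hσ hτ] with p hp
  rw [Real.norm_of_nonneg (kp_nonneg p)]
  exact kp_bound hD hp.1 hp.2

lemma integrable_cont (hD : IsCompact D) (f : ℂ → ℝ) (hf : Continuous f) (σ : Measure ℂ) [IsFiniteMeasure σ]
    (hσ : σ Dᶜ = 0) : Integrable f σ := by
  obtain ⟨C, hC⟩ := (hD.image hf).isBounded.exists_norm_le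
  refine Integrable.mono' (integrable_const C) hf.aestronglyMeasurable ?_
  have : ∀ᵐ z ∂σ, z ∈ D := hσ
  filter_upwards [this] with z hz
  exact hC _ (Set.mem_image_of_mem f hz)

end Bounds

/-- real-valued mutual energy -/
noncomputable def Jr (σ τ : Measure ℂ) : ℝ :=
  (∫⁻ p, kk p ∂(σ.prod τ)).toReal - ∫ p, kp p ∂(σ.prod τ)

lemma kk_symm (p : ℂ × ℂ) : kk p.swap = kk p := by
  simp [kk, norm_sub_rev p.2 p.1]

lemma kp_symm (p : ℂ × ℂ) : kp p.swap = kp p := by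
  simp [kp, norm_sub_rev p.2 p.1]

lemma Jr_symm (σ τ : Measure ℂ) [SFinite σ] [SFinite τ] : Jr σ τ = Jr τ σ := by
  unfold Jr
  rw [← lintegral_prod_swap, ← integral_prod_swap]
  simp_rw [kk_symm, kp_symm]

lemma F_measurable (μ : Measure ℂ) [SFinite μ] :
    Measurable fun z => ∫⁻ ζ, kk (z, ζ) ∂μ :=
  meas_kk.lintegral_prod_right'

lemma potential_rep {D : Set ℂ} (hD : IsCompact D) (μ σ : Measure ℂ)
    [IsFiniteMeasure μ] [IsFiniteMeasure σ] (hμD : μ Dᶜ = 0) (hσD : σ Dᶜ = 0)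
    (hfin : ∫⁻ p, kk p ∂(σ.prod μ) ≠ ⊤) :
    (∀ᵐ z ∂σ, Integrable (fun ζ => Real.log ‖z - ζ‖⁻¹) μ ∧
      ∫ ζ, Real.log ‖z - ζ‖⁻¹ ∂μ = (∫⁻ ζ, kk (z, ζ) ∂μ).toReal - ∫ ζ, kp (z, ζ) ∂μ) ∧
    Integrable (fun z => ∫ ζ, Real.log ‖z - ζ‖⁻¹ ∂μ) σ ∧
    ∫ z, (∫ ζ, Real.log ‖z - ζ‖⁻¹ ∂μ) ∂σ = Jr σ μ := by
  set F : ℂ → ℝ≥0∞ := fun z => ∫⁻ ζ, kk (z, ζ) ∂μ with hFdef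
  have hFm : Measurable F := F_measurable μ
  have hTon : ∫⁻ z, F z ∂σ = ∫⁻ p, kk p ∂(σ.prod μ) := (lintegral_prod _ meas_kk.aemeasurable).symm
  have hFae : ∀ᵐ z ∂σ, F z < ⊤ := by
    apply ae_lt_top hFm
    rw [hTon]; exact hfin
  have hzD : ∀ᵐ z ∂σ, z ∈ D := hσD
  have hζD : ∀ᵐ ζ ∂μ, ζ ∈ D := hμD
  -- pointwise part
  have part1 : ∀ᵐ z ∂σ, Integrable (fun ζ => Real.log ‖z - ζ‖⁻¹) μ ∧
      ∫ ζ, Real.log ‖z - ζ‖⁻¹ ∂μ = (F z).toReal - ∫ ζ, kp (z, ζ) ∂μ := by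
    filter_upwards [hFae, hzD] with z hz hzD'
    have hmeasf : Measurable fun ζ => Real.log ‖z - ζ‖⁻¹ :=
      ((measurable_const.sub measurable_id).norm.inv.log)
    have hgi : Integrable (fun ζ => max (Real.log ‖z - ζ‖⁻¹) 0) μ := by
      refine ⟨(hmeasf.max measurable_const).aestronglyMeasurable, ?_⟩
      rw [hasFiniteIntegral_iff_ofReal (f := fun ζ => max (Real.log ‖z - ζ‖⁻¹) 0)
        (Filter.Eventually.of_forall fun ζ => le_max_right _ _)]
      have : ∀ ζ, ENNReal.ofReal (max (Real.log ‖z - ζ‖⁻¹) 0) = kk (z, ζ) := fun ζ =>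
        ofReal_max_zero _
      simp_rw [this]
      exact hz
    have hhi : Integrable (fun ζ => kp (z, ζ)) μ := by
      refine Integrable.mono' (integrable_const (max (Real.log (Metric.diam D + 1)) 0))
        (meas_kp.comp (measurable_const.prodMk measurable_id)).aestronglyMeasurable ?_
      filter_upwards [hζD] with ζ hζ
      rw [Real.norm_of_nonneg (kp_nonneg _)]
      exact kp_bound hD hzD' hζ
    have hsplit : (fun ζ => Real.log ‖z - ζ‖⁻¹) =
        fun ζ => max (Real.log ‖z - ζ‖⁻¹) 0 - kp (z, ζ) := by
      funext ζ
      have : kp (z, ζ) = max (-(Real.log ‖z - ζ‖⁻¹)) 0 := by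
        simp [kp, Real.log_inv]
      rw [this, max_zero_sub_max_neg_zero_eq_self]
    have hfi : Integrable (fun ζ => Real.log ‖z - ζ‖⁻¹) μ := by
      rw [hsplit]; exact hgi.sub hhi
    refine ⟨hfi, ?_⟩
    have h1 : ∫ ζ, Real.log ‖z - ζ‖⁻¹ ∂μ
        = ∫ ζ, max (Real.log ‖z - ζ‖⁻¹) 0 ∂μ - ∫ ζ, kp (z, ζ) ∂μ := by
      rw [hsplit, integral_sub hgi hhi]
    have h2 : ∫ ζ, max (Real.log ‖z - ζ‖⁻¹) 0 ∂μ = (F z).toReal := by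
      rw [integral_eq_lintegral_of_nonneg_ae (f := fun ζ => max (Real.log ‖z - ζ‖⁻¹) 0)
        (Filter.Eventually.of_forall fun ζ => le_max_right _ _)
        (hmeasf.max measurable_const).aestronglyMeasurable]
      congr 1
      refine lintegral_congr fun ζ => ofReal_max_zero _
    rw [h1, h2]
  have hrep : (fun z => ∫ ζ, Real.log ‖z - ζ‖⁻¹ ∂μ)
      =ᵐ[σ] fun z => (F z).toReal - ∫ ζ, kp (z, ζ) ∂μ := by
    filter_upwards [part1] with z hz using hz.2
  have hFint : Integrable (fun z => (F z).toReal) σ :=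
    integrable_toReal_of_lintegral_ne_top hFm.aemeasurable (by rw [hTon]; exact hfin)
  have hkpint : Integrable kp (σ.prod μ) := integrable_kp hD σ μ hσD hμD
  have hGint : Integrable (fun z => ∫ ζ, kp (z, ζ) ∂μ) σ := hkpint.integral_prod_left
  refine ⟨part1, (hFint.sub hGint).congr hrep.symm, ?_⟩
  rw [integral_congr_ae hrep]
  rw [integral_sub hFint hGint]
  unfold Jr
  congr 1
  · rw [integral_toReal hFm.aemeasurable hFae, hTon]
  · exact (integral_prod kp hkpint).symm

lemma energyE_def (V : ℂ → ℝ) (σ : Measure ℂ) :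
    energyE V σ = ((∫ z, V z ∂σ : ℝ) : EReal) + ((∫⁻ p, kk p ∂(σ.prod σ) : ℝ≥0∞) : EReal)
      - ((∫ p, kp p ∂(σ.prod σ) : ℝ) : EReal) := rfl

lemma energyE_eq_coe (V : ℂ → ℝ) (σ : Measure ℂ)
    (h : ∫⁻ p, kk p ∂(σ.prod σ) ≠ ⊤) :
    energyE V σ = ((∫ z, V z ∂σ + Jr σ σ : ℝ) : EReal) := by
  rw [energyE_def, coe_ennreal_eq _ h, Jr]
  norm_cast
  ring

lemma energyE_eq_top (V : ℂ → ℝ) (σ : Measure ℂ)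
    (h : ∫⁻ p, kk p ∂(σ.prod σ) = ⊤) : energyE V σ = ⊤ := by
  rw [energyE_def, h, EReal.coe_ennreal_top, EReal.add_top_of_ne_bot (EReal.coe_ne_bot _),
    EReal.top_sub_coe]


lemma energy_mix {D : Set ℂ} (hD : IsCompact D) (V : ℂ → ℝ) (hV : Continuous V)
    (μ ν : Measure ℂ) [IsFiniteMeasure μ] [IsFiniteMeasure ν]
    (hμD : μ Dᶜ = 0) (hνD : ν Dᶜ = 0)
    (hBμμ : ∫⁻ p, kk p ∂(μ.prod μ) ≠ ⊤) (hBμν : ∫⁻ p, kk p ∂(μ.prod ν) ≠ ⊤)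
    (hBνμ : ∫⁻ p, kk p ∂(ν.prod μ) ≠ ⊤) (hBνν : ∫⁻ p, kk p ∂(ν.prod ν) ≠ ⊤)
    {t : ℝ} (ht0 : 0 < t) (ht1 : t < 1) :
    energyE V (ENNReal.ofReal (1 - t) • μ + ENNReal.ofReal t • ν) =
      (((1 - t) * ∫ z, V z ∂μ + t * ∫ z, V z ∂ν
        + (1 - t) * ((1 - t) * Jr μ μ + t * Jr μ ν)
        + t * ((1 - t) * Jr ν μ + t * Jr ν ν) : ℝ) : EReal) := by
  set c1 := ENNReal.ofReal (1 - t) with hc1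
  set c2 := ENNReal.ofReal t with hc2
  have hc1t : c1 ≠ ⊤ := ENNReal.ofReal_ne_top
  have hc2t : c2 ≠ ⊤ := ENNReal.ofReal_ne_top
  have hc1r : c1.toReal = 1 - t := ENNReal.toReal_ofReal (by linarith)
  have hc2r : c2.toReal = t := ENNReal.toReal_ofReal ht0.le
  set σ := c1 • μ + c2 • ν with hσ
  haveI hfinσ : IsFiniteMeasure σ := by
    constructor
    simp only [hσ, Measure.add_apply, Measure.smul_apply, smul_eq_mul]
    exact ENNReal.add_lt_top.2 ⟨ENNReal.mul_lt_top hc1t.lt_top (measure_lt_top μ _),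
      ENNReal.mul_lt_top hc2t.lt_top (measure_lt_top ν _)⟩
  haveI : IsFiniteMeasure (c1 • μ) := ⟨by
    simp only [Measure.smul_apply, smul_eq_mul]
    exact ENNReal.mul_lt_top hc1t.lt_top (measure_lt_top μ _)⟩
  haveI : IsFiniteMeasure (c2 • ν) := ⟨by
    simp only [Measure.smul_apply, smul_eq_mul]
    exact ENNReal.mul_lt_top hc2t.lt_top (measure_lt_top ν _)⟩
  -- product expansion
  have hprod : σ.prod σ = c1 • (c1 • μ.prod μ + c2 • μ.prod ν)
      + c2 • (c1 • ν.prod μ + c2 • ν.prod ν) := by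
    rw [hσ, Measure.add_prod, smul_prod'' _ _ _ hc1t, smul_prod'' _ _ _ hc2t,
      Measure.prod_add, Measure.prod_add, prod_smul'' _ _ _ hc1t, prod_smul'' _ _ _ hc2t,
      prod_smul'' _ _ _ hc1t, prod_smul'' _ _ _ hc2t, smul_add, smul_add]
  -- V integral
  have hVμ : Integrable V μ := integrable_cont hD V hV μ hμD
  have hVν : Integrable V ν := integrable_cont hD V hV ν hνD
  have hVint : ∫ z, V z ∂σ = (1 - t) * ∫ z, V z ∂μ + t * ∫ z, V z ∂ν := by
    rw [hσ, integral_add_measure (hVμ.smul_measure hc1t) (hVν.smul_measure hc2t),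
      integral_smul_measure, integral_smul_measure, hc1r, hc2r, smul_eq_mul, smul_eq_mul]
  -- lintegral of kk
  have hkkσ : ∫⁻ p, kk p ∂(σ.prod σ)
      = c1 * (c1 * ∫⁻ p, kk p ∂(μ.prod μ) + c2 * ∫⁻ p, kk p ∂(μ.prod ν))
      + c2 * (c1 * ∫⁻ p, kk p ∂(ν.prod μ) + c2 * ∫⁻ p, kk p ∂(ν.prod ν)) := by
    rw [hprod]
    rw [lintegral_add_measure, lintegral_smul_measure, lintegral_smul_measure,
      lintegral_add_measure, lintegral_add_measure, lintegral_smul_measure,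
      lintegral_smul_measure, lintegral_smul_measure, lintegral_smul_measure]
    simp only [smul_eq_mul]
  have hkkσt : ∫⁻ p, kk p ∂(σ.prod σ) ≠ ⊤ := by
    rw [hkkσ]
    refine ENNReal.add_ne_top.2 ⟨ENNReal.mul_ne_top hc1t (ENNReal.add_ne_top.2
      ⟨ENNReal.mul_ne_top hc1t hBμμ, ENNReal.mul_ne_top hc2t hBμν⟩),
      ENNReal.mul_ne_top hc2t (ENNReal.add_ne_top.2
      ⟨ENNReal.mul_ne_top hc1t hBνμ, ENNReal.mul_ne_top hc2t hBνν⟩)⟩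
  have hkkR : (∫⁻ p, kk p ∂(σ.prod σ)).toReal
      = (1 - t) * ((1 - t) * (∫⁻ p, kk p ∂(μ.prod μ)).toReal
          + t * (∫⁻ p, kk p ∂(μ.prod ν)).toReal)
      + t * ((1 - t) * (∫⁻ p, kk p ∂(ν.prod μ)).toReal
          + t * (∫⁻ p, kk p ∂(ν.prod ν)).toReal) := by
    rw [hkkσ]
    rw [ENNReal.toReal_add, ENNReal.toReal_mul, ENNReal.toReal_mul,
      ENNReal.toReal_add, ENNReal.toReal_add, ENNReal.toReal_mul, ENNReal.toReal_mul,
      ENNReal.toReal_mul, ENNReal.toReal_mul, hc1r, hc2r]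
    · exact ENNReal.mul_ne_top hc1t hBνμ
    · exact ENNReal.mul_ne_top hc2t hBνν
    · exact ENNReal.mul_ne_top hc1t hBμμ
    · exact ENNReal.mul_ne_top hc2t hBμν
    · exact ENNReal.mul_ne_top hc1t (ENNReal.add_ne_top.2
        ⟨ENNReal.mul_ne_top hc1t hBμμ, ENNReal.mul_ne_top hc2t hBμν⟩)
    · exact ENNReal.mul_ne_top hc2t (ENNReal.add_ne_top.2
        ⟨ENNReal.mul_ne_top hc1t hBνμ, ENNReal.mul_ne_top hc2t hBνν⟩)
  -- kp integral
  have hkpμμ : Integrable kp (μ.prod μ) := integrable_kp hD μ μ hμD hμD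
  have hkpμν : Integrable kp (μ.prod ν) := integrable_kp hD μ ν hμD hνD
  have hkpνμ : Integrable kp (ν.prod μ) := integrable_kp hD ν μ hνD hμD
  have hkpνν : Integrable kp (ν.prod ν) := integrable_kp hD ν ν hνD hνD
  have hkpR : ∫ p, kp p ∂(σ.prod σ)
      = (1 - t) * ((1 - t) * ∫ p, kp p ∂(μ.prod μ) + t * ∫ p, kp p ∂(μ.prod ν))
      + t * ((1 - t) * ∫ p, kp p ∂(ν.prod μ) + t * ∫ p, kp p ∂(ν.prod ν)) := by
    rw [hprod]
    rw [integral_add_measure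
        (((hkpμμ.smul_measure hc1t).add_measure (hkpμν.smul_measure hc2t)).smul_measure hc1t)
        (((hkpνμ.smul_measure hc1t).add_measure (hkpνν.smul_measure hc2t)).smul_measure hc2t),
      integral_smul_measure, integral_smul_measure,
      integral_add_measure (hkpμμ.smul_measure hc1t) (hkpμν.smul_measure hc2t),
      integral_add_measure (hkpνμ.smul_measure hc1t) (hkpνν.smul_measure hc2t),
      integral_smul_measure, integral_smul_measure, integral_smul_measure,
      integral_smul_measure, hc1r, hc2r]
    simp only [smul_eq_mul]
  rw [energyE_eq_coe V σ hkkσt]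
  congr 1
  unfold Jr
  rw [hVint, hkkR, hkpR]
  ring

end EqmProof

/-- The effective potential `E(z) = V(z) + 2 ∫ log|z-ζ|⁻¹ dμ(ζ)`. -/
noncomputable def effPotential (V : ℂ → ℝ) (μ : Measure ℂ) (z : ℂ) : ℝ :=
  V z + 2 * ∫ ζ, Real.log ‖z - ζ‖⁻¹ ∂μ

open EqmProof

/-- The effective potential of the equilibrium measure is `μ`-a.e. equal to its mean
`E₀ = ∫ E dμ`. -/
theorem effPotential_ae_eq_const (D : Set ℂ) (hD : IsCompact D)
    (hvol : 0 < volume D) (V : ℂ → ℝ) (hV : Continuous V)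
    (μ : Measure ℂ) (hμ : IsEquilibriumOn D V μ) :
    ∀ᵐ z ∂μ, effPotential V μ z = ∫ w, effPotential V μ w ∂μ := by
  classical
  obtain ⟨⟨hprob, hμD, hatom⟩, heq⟩ := hμ
  haveI := hprob
  have hDm : MeasurableSet D := hD.isClosed.measurableSet
  -- Step A: finiteness of the logarithmic energy of μ
  have hBne : ∫⁻ p, kk p ∂(μ.prod μ) ≠ ⊤ := by
    set ρ := volume.restrict D with hρ
    haveI : IsFiniteMeasure ρ := ⟨by rw [hρ, Measure.restrict_apply_univ]; exact hD.measure_lt_top⟩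
    set c := (volume D)⁻¹ with hc
    have hcne : c ≠ ⊤ := ENNReal.inv_ne_top.2 hvol.ne'
    set νL := c • ρ with hνL
    haveI : IsFiniteMeasure νL := ⟨by
      simp only [hνL, Measure.smul_apply, smul_eq_mul]
      exact ENNReal.mul_lt_top hcne.lt_top (measure_lt_top ρ _)⟩
    have hadm : AdmissibleOn D νL := by
      refine ⟨⟨?_⟩, ?_, ?_⟩
      · simp only [hνL, Measure.smul_apply, smul_eq_mul, hρ, Measure.restrict_apply_univ, hc]
        exact ENNReal.inv_mul_cancel hvol.ne' hD.measure_lt_top.ne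
      · simp only [hνL, Measure.smul_apply, smul_eq_mul, hρ,
          Measure.restrict_apply hDm.compl]
        rw [Set.compl_inter_self, measure_empty, mul_zero]
      · intro z
        simp only [hνL, Measure.smul_apply, smul_eq_mul, hρ,
          Measure.restrict_apply (measurableSet_singleton z)]
        rw [measure_mono_null Set.inter_subset_left (measure_singleton z), mul_zero]
    have hfin : ∫⁻ p, kk p ∂(νL.prod νL) ≠ ⊤ := by
      rw [hνL, smul_prod'' c ρ (c • ρ) hcne, prod_smul'' c ρ ρ hcne, lintegral_smul_measure,
        lintegral_smul_measure]
      exact ENNReal.mul_ne_top hcne (ENNReal.mul_ne_top hcne (finite_kk_leb D hD).ne)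
    have hle : equilibriumValue D V ≤ energyE V νL := by
      rw [equilibriumValue]
      exact iInf₂_le νL hadm
    intro hBtop
    have h1 : energyE V μ = ⊤ := energyE_eq_top V μ hBtop
    rw [heq] at h1
    rw [h1] at hle
    rw [energyE_eq_coe V νL hfin] at hle
    exact (EReal.coe_ne_top _) (top_le_iff.1 hle)
  -- Step B: potential representation
  obtain ⟨hptw, hUint, hUval⟩ := potential_rep hD μ μ hμD hμD hBne
  have hVμ : Integrable V μ := integrable_cont hD V hV μ hμD
  set AV := ∫ z, V z ∂μ with hAV
  set Jm := Jr μ μ with hJm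
  have hEfun : effPotential V μ = fun z => V z + 2 * ∫ ζ, Real.log ‖z - ζ‖⁻¹ ∂μ := rfl
  have hEint : Integrable (effPotential V μ) μ := by
    rw [hEfun]; exact hVμ.add (hUint.const_mul 2)
  set E₀ := ∫ w, effPotential V μ w ∂μ with hE₀
  have hE₀val : E₀ = AV + 2 * Jm := by
    rw [hE₀, hEfun, integral_add hVμ (hUint.const_mul 2), integral_const_mul, hUval]
  -- measurable version of the effective potential
  set F : ℂ → ℝ≥0∞ := fun z => ∫⁻ ζ, kk (z, ζ) ∂μ with hF
  set G : ℂ → ℝ := fun z => ∫ ζ, kp (z, ζ) ∂μ with hG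
  set E' : ℂ → ℝ := fun z => V z + 2 * ((F z).toReal - G z) with hE'
  have hE'meas : Measurable E' := by
    have hFm : Measurable F := F_measurable μ
    have hGm : Measurable G := (meas_kp.stronglyMeasurable.integral_prod_right').measurable
    exact hV.measurable.add ((hFm.ennreal_toReal.sub hGm).const_mul 2)
  have hEE' : effPotential V μ =ᵐ[μ] E' := by
    filter_upwards [hptw] with z hz
    rw [hEfun, hE']
    simp only
    rw [hz.2]
  have hE'int : Integrable E' μ := hEint.congr hEE'
  -- Step D : variational inequality
  have hkey : ∀ ε : ℝ, 0 < ε → μ {z | E' z < E₀ - ε} = 0 := by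
    intro ε hε
    by_contra hA0
    set A := {z | E' z < E₀ - ε} with hA
    have hAm : MeasurableSet A := measurableSet_lt hE'meas measurable_const
    set m := μ A with hm
    have hmne : m ≠ 0 := hA0
    have hmt : m ≠ ⊤ := measure_ne_top μ A
    have hcinv : m⁻¹ ≠ ⊤ := ENNReal.inv_ne_top.2 hmne
    haveI : IsFiniteMeasure (μ.restrict A) := inferInstance
    set ν := m⁻¹ • μ.restrict A with hν
    haveI : IsFiniteMeasure ν := ⟨by
      simp only [hν, Measure.smul_apply, smul_eq_mul]
      exact ENNReal.mul_lt_top hcinv.lt_top (measure_lt_top _ _)⟩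
    have hprobν : IsProbabilityMeasure ν := ⟨by
      simp only [hν, Measure.smul_apply, smul_eq_mul, Measure.restrict_apply_univ]
      exact ENNReal.inv_mul_cancel hmne hmt⟩
    have hνD : ν Dᶜ = 0 := by
      simp only [hν, Measure.smul_apply, smul_eq_mul, Measure.restrict_apply hDm.compl]
      rw [measure_mono_null Set.inter_subset_left hμD, mul_zero]
    have hνatom : ∀ z : ℂ, ν {z} = 0 := by
      intro z
      simp only [hν, Measure.smul_apply, smul_eq_mul,
        Measure.restrict_apply (measurableSet_singleton z)]
      rw [measure_mono_null Set.inter_subset_left (hatom z), mul_zero]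
    have hadmν : AdmissibleOn D ν := ⟨hprobν, hνD, hνatom⟩
    -- cross energies are finite
    have hprodμν : μ.prod ν = m⁻¹ • ((μ.prod μ).restrict (Set.univ ×ˢ A)) := by
      rw [hν, prod_smul'' _ _ _ hcinv, ← Measure.prod_restrict, Measure.restrict_univ]
    have hprodνμ : ν.prod μ = m⁻¹ • ((μ.prod μ).restrict (A ×ˢ Set.univ)) := by
      rw [hν, smul_prod'' _ _ _ hcinv, ← Measure.prod_restrict, Measure.restrict_univ]
    have hprodνν : ν.prod ν = (m⁻¹ * m⁻¹) • ((μ.prod μ).restrict (A ×ˢ A)) := by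
      rw [hν, smul_prod'' _ _ _ hcinv, prod_smul'' _ _ _ hcinv, Measure.prod_restrict,
        smul_smul]
    have hres : ∀ S : Set (ℂ × ℂ), ∫⁻ p, kk p ∂((μ.prod μ).restrict S) ≠ ⊤ := by
      intro S
      exact ((lintegral_mono' Measure.restrict_le_self le_rfl).trans_lt hBne.lt_top).ne
    have hBμν : ∫⁻ p, kk p ∂(μ.prod ν) ≠ ⊤ := by
      rw [hprodμν, lintegral_smul_measure]
      exact ENNReal.mul_ne_top hcinv (hres _)
    have hBνμ : ∫⁻ p, kk p ∂(ν.prod μ) ≠ ⊤ := by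
      rw [hprodνμ, lintegral_smul_measure]
      exact ENNReal.mul_ne_top hcinv (hres _)
    have hBνν : ∫⁻ p, kk p ∂(ν.prod ν) ≠ ⊤ := by
      rw [hprodνν, lintegral_smul_measure]
      exact ENNReal.mul_ne_top (ENNReal.mul_ne_top hcinv hcinv) (hres _)
    -- abbreviations
    set BV := ∫ z, V z ∂ν with hBV
    set Jc := Jr ν μ with hJc
    set Jn := Jr ν ν with hJn
    have hsymm : Jr μ ν = Jc := Jr_symm μ ν
    set a := BV + 2 * Jc - (AV + 2 * Jm) with hadef
    set b := Jm - 2 * Jc + Jn with hbdef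
    -- the variational inequality for each t
    have hineq : ∀ t : ℝ, 0 < t → t < 1 → 0 ≤ t * a + t ^ 2 * b := by
      intro t ht0 ht1
      set μt := ENNReal.ofReal (1 - t) • μ + ENNReal.ofReal t • ν with hμt
      have hadmt : AdmissibleOn D μt := by
        refine ⟨⟨?_⟩, ?_, ?_⟩
        · simp only [hμt, Measure.add_apply, Measure.smul_apply, smul_eq_mul,
            measure_univ, mul_one]
          rw [← ENNReal.ofReal_add (by linarith) ht0.le]
          norm_num
        · simp only [hμt, Measure.add_apply, Measure.smul_apply, smul_eq_mul, hμD, hνD,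
            mul_zero, add_zero]
        · intro z
          simp only [hμt, Measure.add_apply, Measure.smul_apply, smul_eq_mul, hatom z,
            hνatom z, mul_zero, add_zero]
      have h1 : energyE V μ ≤ energyE V μt := by
        rw [heq, equilibriumValue]
        exact iInf₂_le μt hadmt
      rw [energyE_eq_coe V μ hBne,
        energy_mix hD V hV μ ν hμD hνD hBne hBμν hBνμ hBνν ht0 ht1] at h1
      have hreal : AV + Jm ≤ (1 - t) * AV + t * BV
          + (1 - t) * ((1 - t) * Jm + t * (Jr μ ν)) + t * ((1 - t) * Jc + t * Jn) :=
        EReal.coe_le_coe_iff.1 h1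
      rw [hsymm] at hreal
      have hid : t * a + t ^ 2 * b = ((1 - t) * AV + t * BV
          + (1 - t) * ((1 - t) * Jm + t * Jc) + t * ((1 - t) * Jc + t * Jn)) - (AV + Jm) := by
        rw [hadef, hbdef]; ring
      linarith
    -- deduce 0 ≤ a
    have ha : 0 ≤ a := by
      by_contra hlt
      push_neg at hlt
      set t := min (1/2 : ℝ) (-a / (2 * |b| + 1)) with htdef
      have hden : (0:ℝ) < 2 * |b| + 1 := by positivity
      have ht0 : 0 < t := lt_min (by norm_num) (div_pos (by linarith) hden)
      have ht1 : t < 1 := (min_le_left _ _).trans_lt (by norm_num)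
      have h := hineq t ht0 ht1
      have ht2 : t ≤ -a / (2 * |b| + 1) := min_le_right _ _
      have h1 : t * (2 * |b| + 1) ≤ -a := (le_div_iff₀ hden).1 ht2
      have h2 : t * |b| ≤ -a / 2 := by nlinarith [abs_nonneg b, ht0]
      have h3 : t ^ 2 * b ≤ t * (t * |b|) := by nlinarith [le_abs_self b, ht0.le, sq_nonneg t]
      nlinarith [ht0, hlt, h2, h3, h]
    -- compute ∫ E' dν and derive the contradiction
    obtain ⟨hptwν, hUintν, hUvalν⟩ := potential_rep hD μ ν hμD hνD hBνμ
    have hVν : Integrable V ν := integrable_cont hD V hV ν hνD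
    have hEνval : ∫ z, effPotential V μ z ∂ν = BV + 2 * Jc := by
      rw [hEfun, integral_add hVν (hUintν.const_mul 2), integral_const_mul, hUvalν]
    have hac : ν ≪ μ := by
      refine Measure.AbsolutelyContinuous.mk fun s hs hs0 => ?_
      simp only [hν, Measure.smul_apply, smul_eq_mul, Measure.restrict_apply hs]
      rw [measure_mono_null Set.inter_subset_left hs0, mul_zero]
    have hEE'ν : effPotential V μ =ᵐ[ν] E' := hac.ae_eq hEE'
    have hE'ν : ∫ z, E' z ∂ν = BV + 2 * Jc := by
      rw [← integral_congr_ae hEE'ν]; exact hEνval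
    -- upper bound on A
    have hintA : IntegrableOn E' A μ := hE'int.integrableOn
    have hsetle : ∫ z in A, E' z ∂μ ≤ (m.toReal) * (E₀ - ε) := by
      have h1 : ∫ z in A, E' z ∂μ ≤ ∫ _ in A, (E₀ - ε) ∂μ := by
        refine setIntegral_mono_on hintA (integrableOn_const hmt) hAm ?_
        intro z hz
        exact le_of_lt hz
      rw [setIntegral_const] at h1
      simpa [smul_eq_mul, hm, measureReal_def] using h1
    have hmpos : 0 < m.toReal := ENNReal.toReal_pos hmne hmt
    have hupper : ∫ z, E' z ∂ν ≤ E₀ - ε := by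
      rw [hν, integral_smul_measure]
      have hinv : (m⁻¹).toReal = (m.toReal)⁻¹ := ENNReal.toReal_inv m
      rw [hinv, smul_eq_mul]
      calc (m.toReal)⁻¹ * ∫ z in A, E' z ∂μ
          ≤ (m.toReal)⁻¹ * ((m.toReal) * (E₀ - ε)) := by
            exact mul_le_mul_of_nonneg_left hsetle (by positivity)
        _ = E₀ - ε := by field_simp
    rw [hE'ν] at hupper
    rw [hadef] at ha
    rw [hE₀val] at hupper
    linarith
  -- Step E : conclusion
  have hgeae : ∀ᵐ z ∂μ, E₀ ≤ E' z := by
    have hnull : μ {z | E' z < E₀} = 0 := by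
      have hsub : {z | E' z < E₀} ⊆ ⋃ n : ℕ, {z | E' z < E₀ - 1 / (n + 1)} := by
        intro z hz
        obtain ⟨n, hn⟩ := exists_nat_one_div_lt (show (0:ℝ) < E₀ - E' z by
          simpa [sub_pos] using hz)
        exact Set.mem_iUnion.2 ⟨n, by simp only [Set.mem_setOf_eq]; linarith⟩
      refine measure_mono_null hsub (measure_iUnion_null fun n => hkey _ ?_)
      positivity
    rw [ae_iff]
    simpa [not_le] using hnull
  have hE'E₀ : ∫ z, E' z ∂μ = E₀ := by
    rw [← integral_congr_ae hEE']
  have hzero : ∫ z, (E' z - E₀) ∂μ = 0 := by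
    rw [integral_sub hE'int (integrable_const E₀), integral_const, hE'E₀]
    simp
  have hz0 : (fun z => E' z - E₀) =ᵐ[μ] 0 := by
    refine (integral_eq_zero_iff_of_nonneg_ae ?_ (hE'int.sub (integrable_const _))).1 hzero
    filter_upwards [hgeae] with z hz
    simp only [Pi.zero_apply, Pi.sub_apply, sub_nonneg]
    exact hz
  filter_upwards [hEE', hz0] with z h1 h2
  have h3 : E' z = E₀ := by
    have := h2
    simp only [Pi.zero_apply] at this
    linarith [this]
  rw [h1, h3]
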